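/- Let u, v, u̇, v̇ ∈ ℝ³ with ⟨u,v⟩ = 0 and v ≠ 0. Then Σⱼ Im(ϖⱼ(u,v)) · (d/dt)|_{t=0} Re(ϖⱼ(u + t u̇, v + t v̇)) = (cosh‖v‖ sinh‖v‖ / ‖v‖) · ⟨v, u̇⟩. In other words, at every point of T*S² with v ≠ 0 the pullback under ϖ of the Liouville 1-form Σⱼ yⱼ dxⱼ of ℂ³ equals (cosh‖v‖ sinh‖v‖/‖v‖) times the canonical 1-form λ_can = Σⱼ vⱼ duⱼ. -/

import Mathlib

open RealInnerProductSpace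
open scoped Classical

/-- The map `ϖ : T*S² → ℂ³`, `ϖ(u,v)ⱼ = uⱼ cosh‖v‖ + i vⱼ sinh‖v‖/‖v‖`
(with `sinh‖v‖/‖v‖` interpreted as `1` when `v = 0`); the same formula defines a smooth
map on the open set `{v ≠ 0}` of `ℝ³ × ℝ³`. -/
noncomputable def varpi (u v : EuclideanSpace ℝ (Fin 3)) : Fin 3 → ℂ := fun j =>
  (u j : ℂ) * (Real.cosh ‖v‖ : ℝ) +
    Complex.I * (v j : ℂ) * ((if v = 0 then 1 else Real.sinh ‖v‖ / ‖v‖ : ℝ) : ℂ)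

lemma hasDerivAt_norm_line (v dv : EuclideanSpace ℝ (Fin 3)) (hv : v ≠ 0) :
    HasDerivAt (fun t : ℝ => ‖v + t • dv‖) (⟪v, dv⟫ / ‖v‖) 0 := by
  have hc : HasDerivAt (fun t : ℝ => v + t • dv) dv 0 := by
    simpa using ((hasDerivAt_id (0:ℝ)).smul_const dv).const_add v
  have h1 : HasDerivAt (fun t : ℝ => ‖v + t • dv‖ ^ 2) (2 * ⟪v, dv⟫) 0 := by
    simpa using hc.norm_sq
  have hne : ‖v‖ ^ 2 ≠ 0 := pow_ne_zero _ (norm_ne_zero_iff.2 hv)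
  have h2 := (Real.hasDerivAt_sqrt (by simpa using hne)).comp 0 h1
  have heq : (fun t : ℝ => Real.sqrt (‖v + t • dv‖ ^ 2)) = fun t : ℝ => ‖v + t • dv‖ := by
    ext t; exact Real.sqrt_sq (norm_nonneg _)
  simp only [Function.comp_def, heq] at h2
  convert h2 using 1
  all_goals try rfl
  rw [Real.sqrt_sq (norm_nonneg _)]
  simp only [zero_smul, add_zero]
  field_simp

lemma varpi_re (u v : EuclideanSpace ℝ (Fin 3)) (j : Fin 3) :
    (varpi u v j).re = u j * Real.cosh ‖v‖ := by
  simp [varpi, Complex.add_re, Complex.mul_re]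

lemma varpi_im (u v : EuclideanSpace ℝ (Fin 3)) (hv : v ≠ 0) (j : Fin 3) :
    (varpi u v j).im = v j * (Real.sinh ‖v‖ / ‖v‖) := by
  simp [varpi, Complex.add_im, Complex.mul_im, Complex.mul_re, hv, Complex.sinh_ofReal_re]

/-- For `u, v, u̇, v̇ ∈ ℝ³` with `⟨u,v⟩ = 0` and `v ≠ 0`,
`Σⱼ Im(ϖⱼ(u,v)) · (d/dt)|₀ Re(ϖⱼ(u + t u̇, v + t v̇)) = (cosh‖v‖ sinh‖v‖/‖v‖)·⟨v,u̇⟩`;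
i.e. at points of `T*S²` with `v ≠ 0`, the pullback under `ϖ` of the Liouville 1-form
`Σⱼ yⱼ dxⱼ` of `ℂ³` equals `(cosh‖v‖ sinh‖v‖/‖v‖)` times the canonical 1-form
`λ_can = Σⱼ vⱼ duⱼ`. -/
theorem varpi_pullback_liouville_form (u v du dv : EuclideanSpace ℝ (Fin 3))
    (huv : ⟪u, v⟫ = 0) (hv : v ≠ 0) :
    ∑ j : Fin 3, (varpi u v j).im *
        deriv (fun t : ℝ => (varpi (u + t • du) (v + t • dv) j).re) 0 =
      Real.cosh ‖v‖ * Real.sinh ‖v‖ / ‖v‖ * ⟪v, du⟫ := by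
  have key : ∀ j : Fin 3,
      deriv (fun t : ℝ => (varpi (u + t • du) (v + t • dv) j).re) 0 =
        du j * Real.cosh ‖v‖ + u j * (Real.sinh ‖v‖ * (⟪v, dv⟫ / ‖v‖)) := by
    intro j
    have hfun : (fun t : ℝ => (varpi (u + t • du) (v + t • dv) j).re)
        = fun t : ℝ => (u j + t * du j) * Real.cosh ‖v + t • dv‖ := by
      ext t
      rw [varpi_re]
      simp [PiLp.add_apply, PiLp.smul_apply, smul_eq_mul]
    rw [hfun]
    have h1 : HasDerivAt (fun t : ℝ => u j + t * du j) (du j) 0 := by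
      simpa using ((hasDerivAt_id (0:ℝ)).mul_const (du j)).const_add (u j)
    have h2 : HasDerivAt (fun t : ℝ => Real.cosh ‖v + t • dv‖)
        (Real.sinh ‖v‖ * (⟪v, dv⟫ / ‖v‖)) 0 := by
      have := (Real.hasDerivAt_cosh ‖v + (0:ℝ) • dv‖).comp 0
        (hasDerivAt_norm_line v dv hv)
      simpa [Function.comp_def] using this
    have := (h1.mul h2).deriv
    simpa [Pi.mul_def] using this
  have him : ∀ j : Fin 3, (varpi u v j).im = v j * (Real.sinh ‖v‖ / ‖v‖) :=
    varpi_im u v hv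
  simp only [key, him]
  have hvdu : ⟪v, du⟫ = ∑ j : Fin 3, v j * du j := by
    simp [PiLp.inner_apply, RCLike.inner_apply, conj_trivial, mul_comm]
  have hvu : ∑ j : Fin 3, v j * u j = 0 := by
    have : ⟪u, v⟫ = ∑ j : Fin 3, u j * v j := by
      simp [PiLp.inner_apply, RCLike.inner_apply, conj_trivial, mul_comm]
    rw [this] at huv
    rw [← huv]
    exact Finset.sum_congr rfl fun j _ => mul_comm _ _
  have expand : ∑ j : Fin 3, v j * (Real.sinh ‖v‖ / ‖v‖) *
      (du j * Real.cosh ‖v‖ + u j * (Real.sinh ‖v‖ * (⟪v, dv⟫ / ‖v‖)))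
      = (Real.sinh ‖v‖ / ‖v‖ * Real.cosh ‖v‖) * ∑ j : Fin 3, v j * du j
        + (Real.sinh ‖v‖ / ‖v‖ * (Real.sinh ‖v‖ * (⟪v, dv⟫ / ‖v‖))) *
            ∑ j : Fin 3, v j * u j := by
    rw [Finset.mul_sum, Finset.mul_sum, ← Finset.sum_add_distrib]
    exact Finset.sum_congr rfl fun j _ => by ring
  rw [expand, hvu, hvdu]
  ring
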